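/- Fix a real number R and a real ρ ≤ 0. Then min over pairs (T,V) with D(T∘V‖T×Q) ≥ R of D(T∘V‖Q∘P) is at least min over pairs (T,V) with supp(V) ⊆ supp(Q) of { D(T∘V‖Q∘P) − ρ·( R − D(T∘V‖T×Q) ) }. In the case of equality, every minimizer of the left-hand side also minimizes the right-hand side and satisfies D(T∘V‖T×Q) = R when ρ < 0 (respectively D(T∘V‖T×Q) ≥ R when ρ = 0). Conversely, if the right-hand minimum is attained by some (T_ρ,V_ρ) with D(T_ρ∘V_ρ‖T_ρ×Q) = R (respectively ≥ R when ρ = 0), then (T_ρ,V_ρ) also attains the left-hand minimum and equality holds. -/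

import Mathlib

open scoped BigOperators
open Filter Topology

/-- `f` is a probability mass function on a finite alphabet. -/
def IsPMF {α : Type*} [Fintype α] (f : α → ℝ) : Prop :=
  (∀ a, 0 ≤ f a) ∧ ∑ a, f a = 1

/-- `P` is a discrete memoryless channel from `𝓧` to `𝓨`. -/
def IsChannel {𝓧 𝓨 : Type*} [Fintype 𝓧] [Fintype 𝓨] (P : 𝓧 → 𝓨 → ℝ) : Prop :=
  ∀ x, IsPMF (P x)

/-- `V` is a conditional pmf on `𝓧` given `𝓨`. -/
def IsCondPMF {𝓧 𝓨 : Type*} [Fintype 𝓧] [Fintype 𝓨] (V : 𝓨 → 𝓧 → ℝ) : Prop :=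
  ∀ y, IsPMF (V y)

/-- one term `s·log(s/t)` of a KL divergence, with the conventions
    `0·log(0/t) = 0` and `s·log(s/0) = +∞` for `s > 0`. -/
noncomputable def klTerm (s t : ℝ) : EReal :=
  if s = 0 then 0 else if t = 0 then ⊤ else ((s * Real.log (s / t) : ℝ) : EReal)

/-- `D(T∘V ‖ Q∘P)`. -/
noncomputable def DQP {𝓧 𝓨 : Type*} [Fintype 𝓧] [Fintype 𝓨]
    (T : 𝓨 → ℝ) (V : 𝓨 → 𝓧 → ℝ) (Q : 𝓧 → ℝ) (P : 𝓧 → 𝓨 → ℝ) : EReal :=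
  ∑ y, ∑ x, klTerm (T y * V y x) (Q x * P x y)

/-- `D(T∘V ‖ T×Q)`. -/
noncomputable def DTQ {𝓧 𝓨 : Type*} [Fintype 𝓧] [Fintype 𝓨]
    (T : 𝓨 → ℝ) (V : 𝓨 → 𝓧 → ℝ) (Q : 𝓧 → ℝ) : EReal :=
  ∑ y, ∑ x, klTerm (T y * V y x) (T y * Q x)

/-- Gallager's function `E₀(ρ,Q)` (for `ρ > −1`). -/
noncomputable def E0 {𝓧 𝓨 : Type*} [Fintype 𝓧] [Fintype 𝓨]
    (ρ : ℝ) (Q : 𝓧 → ℝ) (P : 𝓧 → 𝓨 → ℝ) : ℝ :=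
  - Real.log (∑ y, (∑ x, Q x * P x y ^ (1 / (1 + ρ))) ^ (1 + ρ))

/-- The joint distribution `T_ρ∘V_ρ` on `𝓧 × 𝓨` (for `ρ > −1`). -/
noncomputable def Jrho {𝓧 𝓨 : Type*} [Fintype 𝓧] [Fintype 𝓨]
    (ρ : ℝ) (Q : 𝓧 → ℝ) (P : 𝓧 → 𝓨 → ℝ) (x : 𝓧) (y : 𝓨) : ℝ :=
  Q x * P x y ^ (1 / (1 + ρ)) * (∑ a, Q a * P a y ^ (1 / (1 + ρ))) ^ ρ /
    ∑ y', (∑ a, Q a * P a y' ^ (1 / (1 + ρ))) ^ (1 + ρ)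

/-- `max_{x : Q(x) > 0} P(y|x)`. -/
noncomputable def maxP {𝓧 𝓨 : Type*} (Q : 𝓧 → ℝ) (P : 𝓧 → 𝓨 → ℝ) (y : 𝓨) : ℝ :=
  ⨆ x : {x // 0 < Q x}, P x.1 y

/-- `E₀(−1,Q) = −log ∑_y max_{x : Q(x)>0} P(y|x)`. -/
noncomputable def E0m1 {𝓧 𝓨 : Type*} [Fintype 𝓧] [Fintype 𝓨]
    (Q : 𝓧 → ℝ) (P : 𝓧 → 𝓨 → ℝ) : ℝ :=
  - Real.log (∑ y, maxP Q P y)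

/-- `E₀(ρ,Q)` extended to `ρ = −1`. -/
noncomputable def E0full {𝓧 𝓨 : Type*} [Fintype 𝓧] [Fintype 𝓨]
    (ρ : ℝ) (Q : 𝓧 → ℝ) (P : 𝓧 → 𝓨 → ℝ) : ℝ :=
  if ρ = -1 then E0m1 Q P else E0 ρ Q P

/-- `T_{−1}(y) ∝ max_{a : Q(a)>0} P(y|a)`. -/
noncomputable def Tm1 {𝓧 𝓨 : Type*} [Fintype 𝓧] [Fintype 𝓨]
    (Q : 𝓧 → ℝ) (P : 𝓧 → 𝓨 → ℝ) (y : 𝓨) : ℝ :=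
  maxP Q P y / ∑ y', maxP Q P y'

/-- `V` is admissible at `ρ = −1`: `V(x|y) = 0` for every `x` outside
    `argmax_{a : Q(a)>0} P(y|a)`. -/
def AdmissibleAtM1 {𝓧 𝓨 : Type*} [Fintype 𝓧] [Fintype 𝓨]
    (Q : 𝓧 → ℝ) (P : 𝓧 → 𝓨 → ℝ) (V : 𝓨 → 𝓧 → ℝ) : Prop :=
  ∀ y x, ¬ (0 < Q x ∧ ∀ a, 0 < Q a → P a y ≤ P x y) → V y x = 0

/-- the error exponent `E_e(R,Q)`. -/
noncomputable def Ee {𝓧 𝓨 : Type*} [Fintype 𝓧] [Fintype 𝓨]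
    (R : ℝ) (Q : 𝓧 → ℝ) (P : 𝓧 → 𝓨 → ℝ) : EReal :=
  sInf {v | ∃ T : 𝓨 → ℝ, ∃ V : 𝓨 → 𝓧 → ℝ, IsPMF T ∧ IsCondPMF V ∧
    v = DQP T V Q P + max (DTQ T V Q - (R : EReal)) 0}

/-- the ML correct-decoding exponent `E_c^{ML}(R,Q)`. -/
noncomputable def EcML {𝓧 𝓨 : Type*} [Fintype 𝓧] [Fintype 𝓨]
    (R : ℝ) (Q : 𝓧 → ℝ) (P : 𝓧 → 𝓨 → ℝ) : EReal :=
  sInf {v | ∃ T : 𝓨 → ℝ, ∃ V : 𝓨 → 𝓧 → ℝ, IsPMF T ∧ IsCondPMF V ∧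
    v = DQP T V Q P + max ((R : EReal) - DTQ T V Q) 0}

/-- the strict correct-decoding exponent `E_c(R,Q)` (`+∞` if infeasible). -/
noncomputable def Ec {𝓧 𝓨 : Type*} [Fintype 𝓧] [Fintype 𝓨]
    (R : ℝ) (Q : 𝓧 → ℝ) (P : 𝓧 → 𝓨 → ℝ) : EReal :=
  sInf {v | ∃ T : 𝓨 → ℝ, ∃ V : 𝓨 → 𝓧 → ℝ, IsPMF T ∧ IsCondPMF V ∧
    (R : EReal) ≤ DTQ T V Q ∧ v = DQP T V Q P}

/-- the mutual information `I(Q∘P)`. -/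
noncomputable def MI {𝓧 𝓨 : Type*} [Fintype 𝓧] [Fintype 𝓨]
    (Q : 𝓧 → ℝ) (P : 𝓧 → 𝓨 → ℝ) : ℝ :=
  ∑ x, ∑ y, if Q x * P x y = 0 then 0
    else Q x * P x y * Real.log (P x y / ∑ a, Q a * P a y)

/-- the capacity `C(Z)` of the channel restricted to input letters in `Z`. -/
noncomputable def capacity {𝓧 𝓨 : Type*} [Fintype 𝓧] [Fintype 𝓨]
    (P : 𝓧 → 𝓨 → ℝ) (Z : Set 𝓧) : ℝ :=
  sSup {c | ∃ Q' : 𝓧 → ℝ, IsPMF Q' ∧ (∀ x, 0 < Q' x → x ∈ Z) ∧ c = MI Q' P}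

/-- `R_{−1}^{−}(Q)`. -/
noncomputable def Rm1minus {𝓧 𝓨 : Type*} [Fintype 𝓧] [Fintype 𝓨]
    (Q : 𝓧 → ℝ) (P : 𝓧 → 𝓨 → ℝ) : EReal :=
  sInf {v | ∃ V : 𝓨 → 𝓧 → ℝ, IsCondPMF V ∧ AdmissibleAtM1 Q P V ∧
    v = DTQ (Tm1 Q P) V Q}

/-- `R_{−1}^{+}(Q)`. -/
noncomputable def Rm1plus {𝓧 𝓨 : Type*} [Fintype 𝓧] [Fintype 𝓨]
    (Q : 𝓧 → ℝ) (P : 𝓧 → 𝓨 → ℝ) : EReal :=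
  sSup {v | ∃ V : 𝓨 → 𝓧 → ℝ, IsCondPMF V ∧ AdmissibleAtM1 Q P V ∧
    v = DTQ (Tm1 Q P) V Q}

/-- `F_ρ(T∘V, Q) = D(T∘V‖Q∘P) + ρ·D(T∘V‖T×Q)`. -/
noncomputable def Frho {𝓧 𝓨 : Type*} [Fintype 𝓧] [Fintype 𝓨]
    (ρ : ℝ) (T : 𝓨 → ℝ) (V : 𝓨 → 𝓧 → ℝ) (Q : 𝓧 → ℝ) (P : 𝓧 → 𝓨 → ℝ) : EReal :=
  DQP T V Q P + (ρ : EReal) * DTQ T V Q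

/-- the unconstrained penalized minimum
    `min_{T,V} { D(T∘V‖Q∘P) + ρ·(D(T∘V‖T×Q) − R) }`. -/
noncomputable def penMin {𝓧 𝓨 : Type*} [Fintype 𝓧] [Fintype 𝓨]
    (Q : 𝓧 → ℝ) (P : 𝓧 → 𝓨 → ℝ) (R ρ : ℝ) : EReal :=
  sInf {v | ∃ T : 𝓨 → ℝ, ∃ V : 𝓨 → 𝓧 → ℝ, IsPMF T ∧ IsCondPMF V ∧
    v = DQP T V Q P + (ρ : EReal) * (DTQ T V Q - (R : EReal))}

/-- the support-constrained penalized minimum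
    `min_{T,V : supp(V) ⊆ supp(Q)} { D(T∘V‖Q∘P) − ρ·(R − D(T∘V‖T×Q)) }`. -/
noncomputable def penMinS {𝓧 𝓨 : Type*} [Fintype 𝓧] [Fintype 𝓨]
    (Q : 𝓧 → ℝ) (P : 𝓧 → 𝓨 → ℝ) (R ρ : ℝ) : EReal :=
  sInf {v | ∃ T : 𝓨 → ℝ, ∃ V : 𝓨 → 𝓧 → ℝ, IsPMF T ∧ IsCondPMF V ∧
    (∀ y x, Q x = 0 → V y x = 0) ∧
    v = DQP T V Q P - (ρ : EReal) * ((R : EReal) - DTQ T V Q)}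


section AuxMine
variable {𝓧 𝓨 : Type*} [Fintype 𝓧] [Fintype 𝓨]

lemma klTerm_ne_bot' (s t : ℝ) : klTerm s t ≠ ⊥ := by
  unfold klTerm
  split_ifs
  · simp
  · simp
  · exact EReal.coe_ne_bot _

lemma klTerm_eq_top_iff' (s t : ℝ) : klTerm s t = ⊤ ↔ s ≠ 0 ∧ t = 0 := by
  unfold klTerm
  split_ifs with h1 h2
  · simp [h1]
  · simp [h1, h2]
  · exact iff_of_false (EReal.coe_ne_top _) (fun hh => h2 hh.2)

lemma klTerm_zero' (t : ℝ) : klTerm 0 t = 0 := by simp [klTerm]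

lemma my_sum_ne_bot {ι : Type*} (s : Finset ι) (f : ι → EReal)
    (h : ∀ i ∈ s, f i ≠ ⊥) : ∑ i ∈ s, f i ≠ ⊥ := by
  induction s using Finset.cons_induction with
  | empty => simp
  | cons a s ha ih =>
    rw [Finset.sum_cons, Ne, EReal.add_eq_bot_iff]
    push_neg
    exact ⟨h a (Finset.mem_cons_self a s), ih fun i hi => h i (Finset.mem_cons_of_mem hi)⟩

lemma my_sum_ne_top {ι : Type*} (s : Finset ι) (f : ι → EReal)
    (h : ∀ i ∈ s, f i ≠ ⊤) : ∑ i ∈ s, f i ≠ ⊤ := by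
  induction s using Finset.cons_induction with
  | empty => simp
  | cons a s ha ih =>
    rw [Finset.sum_cons]
    exact (EReal.add_lt_top (h a (Finset.mem_cons_self a s))
      (ih fun i hi => h i (Finset.mem_cons_of_mem hi))).ne

lemma my_term_ne_top {ι : Type*} (s : Finset ι) (f : ι → EReal)
    (hb : ∀ i ∈ s, f i ≠ ⊥) (h : ∑ i ∈ s, f i ≠ ⊤) : ∀ i ∈ s, f i ≠ ⊤ := by
  classical
  intro i hi hit
  apply h
  rw [← Finset.add_sum_erase s f hi, hit]
  exact EReal.top_add_of_ne_bot
    (my_sum_ne_bot _ _ fun j hj => hb j (Finset.mem_erase.mp hj).2)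

lemma DQP_ne_bot' (T : 𝓨 → ℝ) (V : 𝓨 → 𝓧 → ℝ) (Q : 𝓧 → ℝ) (P : 𝓧 → 𝓨 → ℝ) :
    DQP T V Q P ≠ ⊥ :=
  my_sum_ne_bot _ _ fun _ _ => my_sum_ne_bot _ _ fun _ _ => klTerm_ne_bot' _ _

lemma DTQ_ne_bot' (T : 𝓨 → ℝ) (V : 𝓨 → 𝓧 → ℝ) (Q : 𝓧 → ℝ) :
    DTQ T V Q ≠ ⊥ :=
  my_sum_ne_bot _ _ fun _ _ => my_sum_ne_bot _ _ fun _ _ => klTerm_ne_bot' _ _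

lemma DQP_term' {T : 𝓨 → ℝ} {V : 𝓨 → 𝓧 → ℝ} {Q : 𝓧 → ℝ} {P : 𝓧 → 𝓨 → ℝ}
    (h : DQP T V Q P ≠ ⊤) (y : 𝓨) (x : 𝓧) (hs : T y * V y x ≠ 0) :
    Q x * P x y ≠ 0 := by
  have h1 := my_term_ne_top Finset.univ _
    (fun y _ => my_sum_ne_bot _ _ fun x _ => klTerm_ne_bot' _ _) h y (Finset.mem_univ y)
  have h2 := my_term_ne_top Finset.univ _
    (fun x _ => klTerm_ne_bot' _ _) h1 x (Finset.mem_univ x)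
  intro ht
  exact h2 ((klTerm_eq_top_iff' _ _).mpr ⟨hs, ht⟩)

lemma DTQ_ne_top' {T : 𝓨 → ℝ} {V : 𝓨 → 𝓧 → ℝ} {Q : 𝓧 → ℝ}
    (h : ∀ y x, T y * V y x ≠ 0 → Q x ≠ 0) : DTQ T V Q ≠ ⊤ := by
  apply my_sum_ne_top; intro y _; apply my_sum_ne_top; intro x _
  rw [Ne, klTerm_eq_top_iff']
  rintro ⟨hs, ht⟩
  have hT : T y ≠ 0 := fun h0 => hs (by rw [h0, zero_mul])
  exact mul_ne_zero hT (h y x hs) ht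

lemma pen_val_eq' {T : 𝓨 → ℝ} {V : 𝓨 → 𝓧 → ℝ} {Q : 𝓧 → ℝ} {P : 𝓧 → 𝓨 → ℝ}
    (hq : DQP T V Q P ≠ ⊤) (hd : DTQ T V Q ≠ ⊤) (R ρ : ℝ) :
    DQP T V Q P - (ρ : EReal) * ((R : EReal) - DTQ T V Q)
      = (((DQP T V Q P).toReal - ρ * (R - (DTQ T V Q).toReal) : ℝ) : EReal) := by
  nth_rewrite 1 [← EReal.coe_toReal hq (DQP_ne_bot' T V Q P)]
  nth_rewrite 1 [← EReal.coe_toReal hd (DTQ_ne_bot' T V Q)]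
  norm_cast

lemma exists_V' (Q : 𝓧 → ℝ) (P : 𝓧 → 𝓨 → ℝ) (T : 𝓨 → ℝ) (V : 𝓨 → 𝓧 → ℝ)
    (hQ : IsPMF Q) (hV : IsCondPMF V)
    (h : ∀ y x, T y ≠ 0 → Q x = 0 → V y x = 0) :
    ∃ V' : 𝓨 → 𝓧 → ℝ, IsCondPMF V' ∧ (∀ y x, Q x = 0 → V' y x = 0) ∧
      DQP T V' Q P = DQP T V Q P ∧ DTQ T V' Q = DTQ T V Q := by
  classical
  obtain ⟨x0, hx0⟩ : ∃ x0, Q x0 ≠ 0 := by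
    by_contra hc
    push_neg at hc
    have h1 := hQ.2
    simp [hc] at h1
  refine ⟨fun y x => if T y = 0 then (if x = x0 then 1 else 0) else V y x, ?_, ?_, ?_, ?_⟩
  · intro y
    constructor
    · intro x
      dsimp only
      split_ifs with h1 h2
      · exact zero_le_one
      · exact le_rfl
      · exact (hV y).1 x
    · dsimp only
      by_cases hTy : T y = 0
      · simp [hTy]
      · simp only [hTy, if_false]
        exact (hV y).2
  · intro y x hQx
    dsimp only
    split_ifs with h1 h2
    · exact absurd (h2 ▸ hQx) hx0
    · rfl
    · exact h y x h1 hQx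
  · unfold DQP
    refine Finset.sum_congr rfl fun y _ => Finset.sum_congr rfl fun x _ => ?_
    by_cases hTy : T y = 0
    · simp [hTy, klTerm_zero']
    · simp [hTy]
  · unfold DTQ
    refine Finset.sum_congr rfl fun y _ => Finset.sum_congr rfl fun x _ => ?_
    by_cases hTy : T y = 0
    · simp [hTy, klTerm_zero']
    · simp [hTy]

lemma penMinS_le_val' (Q : 𝓧 → ℝ) (P : 𝓧 → 𝓨 → ℝ) (R ρ : ℝ)
    (T : 𝓨 → ℝ) (V : 𝓨 → 𝓧 → ℝ) (hT : IsPMF T) (hV : IsCondPMF V)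
    (hVs : ∀ y x, Q x = 0 → V y x = 0) :
    penMinS Q P R ρ ≤ DQP T V Q P - (ρ : EReal) * ((R : EReal) - DTQ T V Q) := by
  unfold penMinS
  exact sInf_le ⟨T, V, hT, hV, hVs, rfl⟩

lemma penMinS_le' (Q : 𝓧 → ℝ) (P : 𝓧 → 𝓨 → ℝ) (R ρ : ℝ) (hQ : IsPMF Q) (hρ : ρ ≤ 0)
    (T : 𝓨 → ℝ) (V : 𝓨 → 𝓧 → ℝ) (hT : IsPMF T) (hV : IsCondPMF V)
    (hR : (R : EReal) ≤ DTQ T V Q) :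
    penMinS Q P R ρ ≤ DQP T V Q P := by
  by_cases htop : DQP T V Q P = ⊤
  · rw [htop]; exact le_top
  have hkey : ∀ y x, T y * V y x ≠ 0 → Q x ≠ 0 := fun y x hs hQx =>
    DQP_term' htop y x hs (by rw [hQx, zero_mul])
  have hsupp : ∀ y x, T y ≠ 0 → Q x = 0 → V y x = 0 := by
    intro y x hTy hQx
    by_contra hVx
    exact hkey y x (mul_ne_zero hTy hVx) hQx
  have hdtop : DTQ T V Q ≠ ⊤ := DTQ_ne_top' hkey
  obtain ⟨V', hV', hVs', hDQP', hDTQ'⟩ := exists_V' Q P T V hQ hV hsupp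
  have h1 : penMinS Q P R ρ ≤ DQP T V Q P - (ρ : EReal) * ((R : EReal) - DTQ T V Q) := by
    have := penMinS_le_val' Q P R ρ T V' hT hV' hVs'
    rwa [hDQP', hDTQ'] at this
  refine h1.trans ?_
  set d := (DTQ T V Q).toReal with hdd
  have hdeq : DTQ T V Q = (d : EReal) := (EReal.coe_toReal hdtop (DTQ_ne_bot' T V Q)).symm
  rw [hdeq] at hR
  have hRd : R ≤ d := by exact_mod_cast hR
  have hc : 0 ≤ ρ * (R - d) := by nlinarith
  rw [hdeq]
  have hco : (ρ : EReal) * ((R : EReal) - (d : EReal)) = ((ρ * (R - d) : ℝ) : EReal) := by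
    norm_cast
  rw [hco, sub_eq_add_neg]
  calc DQP T V Q P + -((ρ * (R - d) : ℝ) : EReal) ≤ DQP T V Q P + 0 := by
        gcongr
        exact_mod_cast neg_nonpos.mpr hc
    _ = DQP T V Q P := add_zero _

lemma penMinS_ne_top' (Q : 𝓧 → ℝ) (P : 𝓧 → 𝓨 → ℝ) (R ρ : ℝ)
    [Nonempty 𝓧] [Nonempty 𝓨] (hP : IsChannel P) (hQ : IsPMF Q) :
    penMinS Q P R ρ ≠ ⊤ := by
  classical
  obtain ⟨y0, hy0⟩ : ∃ y0, (∑ x, Q x * P x y0) ≠ 0 := by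
    by_contra hc
    push_neg at hc
    have h1 : ∑ y, ∑ x, Q x * P x y = 1 := by
      rw [Finset.sum_comm]
      calc ∑ x, ∑ y, Q x * P x y = ∑ x, Q x * ∑ y, P x y := by
            simp [Finset.mul_sum]
        _ = ∑ x, Q x := by
            refine Finset.sum_congr rfl fun x _ => ?_
            rw [(hP x).2, mul_one]
        _ = 1 := hQ.2
    simp [hc] at h1
  set c := ∑ x, Q x * P x y0 with hcc
  have hcnn : 0 ≤ c := Finset.sum_nonneg fun x _ => mul_nonneg (hQ.1 x) ((hP x).1 y0)
  set T : 𝓨 → ℝ := fun y => if y = y0 then 1 else 0 with hTdef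
  set V : 𝓨 → 𝓧 → ℝ := fun _ x => Q x * P x y0 / c with hVdef
  have hT : IsPMF T := by
    constructor
    · intro y; simp only [hTdef]; split_ifs <;> norm_num
    · simp [hTdef]
  have hV : IsCondPMF V := by
    intro y
    constructor
    · intro x
      exact div_nonneg (mul_nonneg (hQ.1 x) ((hP x).1 y0)) hcnn
    · simp only [hVdef]
      rw [← Finset.sum_div]
      exact div_self hy0
  have hVs : ∀ y x, Q x = 0 → V y x = 0 := by
    intro y x h
    simp [hVdef, h]
  have hqtop : DQP T V Q P ≠ ⊤ := by
    apply my_sum_ne_top; intro y _; apply my_sum_ne_top; intro x _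
    rw [Ne, klTerm_eq_top_iff']
    rintro ⟨hs, ht⟩
    apply hs
    by_cases hy : y = y0
    · subst hy
      simp [hTdef, hVdef, ht]
    · simp [hTdef, hy]
  have hdtop : DTQ T V Q ≠ ⊤ := DTQ_ne_top' (fun y x hs hQx => hs (by simp [hVdef, hQx]))
  intro htop
  have hle := penMinS_le_val' Q P R ρ T V hT hV hVs
  rw [htop] at hle
  have h2 := top_le_iff.mp hle
  rw [pen_val_eq' hqtop hdtop R ρ] at h2
  exact EReal.coe_ne_top _ h2

end AuxMine

theorem stmt_5 {𝓧 𝓨 : Type*} [Fintype 𝓧] [Fintype 𝓨] [Nonempty 𝓧] [Nonempty 𝓨]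
    (P : 𝓧 → 𝓨 → ℝ) (hP : IsChannel P) (Q : 𝓧 → ℝ) (hQ : IsPMF Q)
    (R ρ : ℝ) (hρ : ρ ≤ 0) :
    penMinS Q P R ρ ≤ Ec R Q P
    ∧ (Ec R Q P = penMinS Q P R ρ →
        ∀ (T : 𝓨 → ℝ) (V : 𝓨 → 𝓧 → ℝ), IsPMF T → IsCondPMF V →
          (R : EReal) ≤ DTQ T V Q → DQP T V Q P = Ec R Q P →
          DQP T V Q P - (ρ : EReal) * ((R : EReal) - DTQ T V Q) = penMinS Q P R ρ
          ∧ (ρ < 0 → DTQ T V Q = (R : EReal))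
          ∧ (ρ = 0 → (R : EReal) ≤ DTQ T V Q))
    ∧ (∀ (T : 𝓨 → ℝ) (V : 𝓨 → 𝓧 → ℝ), IsPMF T → IsCondPMF V →
        (∀ y x, Q x = 0 → V y x = 0) →
        DQP T V Q P - (ρ : EReal) * ((R : EReal) - DTQ T V Q) = penMinS Q P R ρ →
        (ρ < 0 → DTQ T V Q = (R : EReal)) →
        (ρ = 0 → (R : EReal) ≤ DTQ T V Q) →
        ((R : EReal) ≤ DTQ T V Q ∧ DQP T V Q P = Ec R Q P)
        ∧ Ec R Q P = penMinS Q P R ρ) := by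
  have hP1 : penMinS Q P R ρ ≤ Ec R Q P := by
    apply le_sInf
    rintro v ⟨T, V, hT, hV, hR, rfl⟩
    exact penMinS_le' Q P R ρ hQ hρ T V hT hV hR
  refine ⟨hP1, ?_, ?_⟩
  · intro hEc T V hT hV hR hDQP
    have hpTop := penMinS_ne_top' Q P R ρ hP hQ
    have hqTop : DQP T V Q P ≠ ⊤ := by rw [hDQP, hEc]; exact hpTop
    have hkey : ∀ y x, T y * V y x ≠ 0 → Q x ≠ 0 := fun y x hs hQx =>
      DQP_term' hqTop y x hs (by rw [hQx, zero_mul])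
    have hdTop : DTQ T V Q ≠ ⊤ := DTQ_ne_top' hkey
    have hsupp : ∀ y x, T y ≠ 0 → Q x = 0 → V y x = 0 := by
      intro y x hTy hQx
      by_contra hVx
      exact hkey y x (mul_ne_zero hTy hVx) hQx
    obtain ⟨V', hV', hVs', hDQP', hDTQ'⟩ := exists_V' Q P T V hQ hV hsupp
    have h1 : penMinS Q P R ρ ≤ DQP T V Q P - (ρ : EReal) * ((R : EReal) - DTQ T V Q) := by
      have := penMinS_le_val' Q P R ρ T V' hT hV' hVs'
      rwa [hDQP', hDTQ'] at this
    set a := (DQP T V Q P).toReal with hadef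
    have haeq : DQP T V Q P = (a : EReal) :=
      (EReal.coe_toReal hqTop (DQP_ne_bot' T V Q P)).symm
    set d := (DTQ T V Q).toReal with hddef
    have hdeq : DTQ T V Q = (d : EReal) :=
      (EReal.coe_toReal hdTop (DTQ_ne_bot' T V Q)).symm
    have hRd : R ≤ d := by rw [hdeq] at hR; exact_mod_cast hR
    have hcge : 0 ≤ ρ * (R - d) := by nlinarith
    have hvveq : DQP T V Q P - (ρ : EReal) * ((R : EReal) - DTQ T V Q)
        = ((a - ρ * (R - d) : ℝ) : EReal) := by
      rw [haeq, hdeq]; norm_cast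
    have hpm : penMinS Q P R ρ = (a : EReal) := by rw [← hEc, ← hDQP, haeq]
    have h2 : DQP T V Q P - (ρ : EReal) * ((R : EReal) - DTQ T V Q) ≤ (a : EReal) := by
      rw [hvveq]
      exact_mod_cast (by linarith : a - ρ * (R - d) ≤ a)
    have h3 : (a : EReal) ≤ DQP T V Q P - (ρ : EReal) * ((R : EReal) - DTQ T V Q) := by
      rw [← hpm]; exact h1
    have hveq : DQP T V Q P - (ρ : EReal) * ((R : EReal) - DTQ T V Q) = (a : EReal) :=
      le_antisymm h2 h3
    have hz : ρ * (R - d) = 0 := by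
      have h4 : ((a - ρ * (R - d) : ℝ) : EReal) = ((a : ℝ) : EReal) := by
        rw [← hvveq, hveq]
      have h5 : a - ρ * (R - d) = a := by exact_mod_cast h4
      linarith
    refine ⟨hveq.trans hpm.symm, ?_, fun _ => hR⟩
    intro hρlt
    rw [hdeq]
    norm_cast
    rcases mul_eq_zero.mp hz with h | h
    · exact absurd h hρlt.ne
    · linarith
  · intro T V hT hV hVs hval hlt heq0
    have hdTop : DTQ T V Q ≠ ⊤ :=
      DTQ_ne_top' (fun y x hs hQx => hs (by rw [hVs y x hQx, mul_zero]))
    set d := (DTQ T V Q).toReal with hddef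
    have hdeq : DTQ T V Q = (d : EReal) :=
      (EReal.coe_toReal hdTop (DTQ_ne_bot' T V Q)).symm
    have hRd : (R : EReal) ≤ DTQ T V Q := by
      rcases lt_or_eq_of_le hρ with h | h
      · rw [hlt h]
      · exact heq0 h
    have hz : (ρ : EReal) * ((R : EReal) - DTQ T V Q) = 0 := by
      rcases lt_or_eq_of_le hρ with h | h
      · have h6 : (d : EReal) = (R : EReal) := by rw [← hdeq]; exact hlt h
        have h7 : d = R := by exact_mod_cast h6
        rw [hdeq, h7]
        norm_cast
        ring
      · rw [h]
        have h8 : ((0 : ℝ) : EReal) = (0 : EReal) := by norm_cast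
        rw [h8, zero_mul]
    have hval' : DQP T V Q P = penMinS Q P R ρ := by rw [← hval, hz, sub_zero]
    have hEcle : Ec R Q P ≤ DQP T V Q P := by
      unfold Ec
      exact sInf_le ⟨T, V, hT, hV, hRd, rfl⟩
    have hEq : Ec R Q P = DQP T V Q P :=
      le_antisymm hEcle (by rw [hval']; exact hP1)
    exact ⟨⟨hRd, hEq.symm⟩, hEq.trans hval'⟩
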